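/- Fix a real θ with 1 ≤ θ ≤ 2.13, and let 4.999 ≤ r_0 < r_1 ≤ 5. For j ∈ {0, 1}, let γ_j be the unique root in the interval (0, 0.56) of the cubic q_j(x) = 1 − (r_j − θ)x + (r_j − 2θ)x² + θx³. Then γ_1 < γ_0; consequently 1/(1 − γ_1) − θ < 1/(1 − γ_0) − θ, i.e., γ and 1/(1 − γ) − θ decrease strictly in r. -/
import Mathlib


/-- The cubic `q(x) = 1 - (r - θ)x + (r - 2θ)x² + θx³`. -/
def q (r θ x : ℝ) : ℝ :=
  1 - (r - θ) * x + (r - 2 * θ) * x ^ 2 + θ * x ^ 3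

/-- For fixed `1 ≤ θ ≤ 2.13` and `4.999 ≤ r₀ < r₁ ≤ 5`, the root `γ` of `q` in
`(0, 0.56)` decreases strictly in `r`, and so does `1/(1 - γ) - θ`. -/
theorem gamma_decreasing (θ r₀ r₁ γ₀ γ₁ : ℝ)
    (hθ1 : 1 ≤ θ) (hθ2 : θ ≤ 2.13)
    (hr0 : 4.999 ≤ r₀) (hr01 : r₀ < r₁) (hr1 : r₁ ≤ 5)
    (hγ₀ : 0 < γ₀ ∧ γ₀ < 0.56 ∧ q r₀ θ γ₀ = 0)
    (hγ₁ : 0 < γ₁ ∧ γ₁ < 0.56 ∧ q r₁ θ γ₁ = 0) :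
    γ₁ < γ₀ ∧ 1 / (1 - γ₁) - θ < 1 / (1 - γ₀) - θ := by
  obtain ⟨h0p, h0u, h0q⟩ := hγ₀
  obtain ⟨h1p, h1u, h1q⟩ := hγ₁
  have key : γ₁ < γ₀ := by
    by_contra h
    push_neg at h  -- h : γ₀ ≤ γ₁
    -- q r₁ θ γ₀ < 0
    have hA : q r₁ θ γ₀ < 0 := by
      have : q r₁ θ γ₀ = q r₀ θ γ₀ + (r₁ - r₀) * (γ₀ ^ 2 - γ₀) := by
        unfold q; ring
      rw [this, h0q]
      nlinarith [mul_pos (sub_pos.mpr hr01) (mul_pos h0p (sub_pos.mpr h0u))]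
    -- q r₁ θ 0.56 < 0
    have hB : q r₁ θ 0.56 < 0 := by
      unfold q
      nlinarith
    rcases eq_or_lt_of_le h with heq | hlt
    · rw [← heq] at h1q
      linarith [hA, h1q.symm ▸ hA]
    · -- convexity identity
      have hE : (0.56 - γ₀) * q r₁ θ γ₁
          = (0.56 - γ₁) * q r₁ θ γ₀ + (γ₁ - γ₀) * q r₁ θ 0.56
            - (γ₁ - γ₀) * (0.56 - γ₁) * (0.56 - γ₀) * ((r₁ - 2 * θ) + θ * (γ₀ + γ₁ + 0.56)) := by
        unfold q; ring
      rw [h1q, mul_zero] at hE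
      have hS : 0 < (r₁ - 2 * θ) + θ * (γ₀ + γ₁ + 0.56) := by nlinarith
      nlinarith [mul_pos (mul_pos (mul_pos (sub_pos.mpr hlt) (sub_pos.mpr h1u))
          (sub_pos.mpr h0u)) hS,
        mul_pos (sub_pos.mpr h1u) (neg_pos.mpr hA),
        mul_pos (sub_pos.mpr hlt) (neg_pos.mpr hB)]
  refine ⟨key, ?_⟩
  have h1 : (0:ℝ) < 1 - γ₀ := by linarith
  have h2 : (0:ℝ) < 1 - γ₁ := by linarith
  have : 1 / (1 - γ₁) < 1 / (1 - γ₀) := by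
    apply one_div_lt_one_div_of_lt h1
    linarith
  linarith
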